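/- arXiv:2103.10086 — 5 statements merged into one kernel-verified Lean document; each statement's English description precedes it below -/
import Mathlib

section
/- Let β, β̃ ∈ ℂ^K with ‖β − β̃‖_∞ ≤ δ. Then the Vandermonde matrices satisfy ‖V_L(β̃) − V_L(β)‖_∞ ≤ √2 · K · L · ρ_{|β|+δ𝟙}^{L−1} · δ, where ‖·‖_∞ is the maximum-row-sum operator norm. -/
open Finset

/-- The rectangular Vandermonde matrix `V_L(β) = (β_k^ℓ)`. -/
noncomputable def vand (L : ℕ) {K : ℕ} (β : Fin K → ℂ) : Matrix (Fin L) (Fin K) ℂ :=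
  fun ℓ k => β k ^ (ℓ : ℕ)

/-- `ρ_v = max {1, max_k |v_k|}` for a real vector. -/
noncomputable def rhoR {K : ℕ} (v : Fin K → ℝ) : ℝ := max 1 (⨆ k, |v k|)

lemma pow_sub_pow_norm_le {x y : ℂ} {ρ : ℝ} (hx : ‖x‖ ≤ ρ) (hy : ‖y‖ ≤ ρ)
    (hρ : 1 ≤ ρ) {n L : ℕ} (hn : n ≤ L) :
    ‖x ^ n - y ^ n‖ ≤ L * ρ ^ (L - 1) * ‖x - y‖ := by
  have h0 : (0:ℝ) ≤ ρ := le_trans zero_le_one hρ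
  rw [← geom_sum₂_mul x y n]
  calc ‖(∑ i ∈ range n, x ^ i * y ^ (n - 1 - i)) * (x - y)‖
      = ‖∑ i ∈ range n, x ^ i * y ^ (n - 1 - i)‖ * ‖x - y‖ := norm_mul _ _
    _ ≤ (L * ρ ^ (L - 1)) * ‖x - y‖ := by
        apply mul_le_mul_of_nonneg_right _ (norm_nonneg _)
        calc ‖∑ i ∈ range n, x ^ i * y ^ (n - 1 - i)‖
            ≤ ∑ i ∈ range n, ‖x ^ i * y ^ (n - 1 - i)‖ := norm_sum_le _ _
          _ ≤ ∑ _i ∈ range n, ρ ^ (L - 1) := by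
              apply Finset.sum_le_sum
              intro i hi
              rw [norm_mul, norm_pow, norm_pow]
              have hi' := Finset.mem_range.mp hi
              calc ‖x‖ ^ i * ‖y‖ ^ (n - 1 - i)
                  ≤ ρ ^ i * ρ ^ (n - 1 - i) := by
                    apply mul_le_mul (pow_le_pow_left₀ (norm_nonneg _) hx i)
                      (pow_le_pow_left₀ (norm_nonneg _) hy _)
                      (pow_nonneg (norm_nonneg _) _) (pow_nonneg h0 _)
                _ = ρ ^ (i + (n - 1 - i)) := (pow_add ρ _ _).symm
                _ ≤ ρ ^ (L - 1) := by
                    apply pow_le_pow_right₀ hρ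
                    omega
          _ = n * ρ ^ (L - 1) := by rw [Finset.sum_const, Finset.card_range]; ring
          _ ≤ L * ρ ^ (L - 1) := by
              apply mul_le_mul_of_nonneg_right _ (pow_nonneg h0 _)
              exact_mod_cast hn

/-- Perturbation of the Vandermonde matrix: if `‖β − β̃‖_∞ ≤ δ` then every absolute
row sum of `V_L(β̃) − V_L(β)` (hence the maximum-row-sum operator norm) is bounded
by `√2 · K · L · ρ_{|β|+δ𝟙}^{L−1} · δ`. -/
theorem vandermonde_perturbation {K L : ℕ} (β βt : Fin K → ℂ) (δ : ℝ)
    (h : ∀ k, ‖β k - βt k‖ ≤ δ) :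
    ∀ ℓ : Fin L, ∑ k, ‖vand L βt ℓ k - vand L β ℓ k‖ ≤
      Real.sqrt 2 * K * L * rhoR (fun k => ‖β k‖ + δ) ^ (L - 1) * δ := by
  intro ℓ
  rcases Nat.eq_zero_or_pos K with hK | hK
  · subst hK; simp
  have hδ : 0 ≤ δ := le_trans (norm_nonneg _) (h ⟨0, hK⟩)
  set ρ := rhoR (fun k => ‖β k‖ + δ) with hρdef
  have hρ1 : 1 ≤ ρ := le_max_left _ _
  have hρ0 : 0 ≤ ρ := le_trans zero_le_one hρ1
  have hρk : ∀ k, ‖β k‖ + δ ≤ ρ := by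
    intro k
    refine le_trans ?_ (le_max_right _ _)
    refine le_trans (le_abs_self _) ?_
    exact le_ciSup (f := fun k => |‖β k‖ + δ|)
      (Set.Finite.bddAbove (Set.finite_range _)) k
  have key : ∀ k, ‖vand L βt ℓ k - vand L β ℓ k‖ ≤ L * ρ ^ (L - 1) * δ := by
    intro k
    have hb : ‖β k‖ ≤ ρ := le_trans (le_add_of_nonneg_right hδ) (hρk k)
    have hbt : ‖βt k‖ ≤ ρ := by
      have : ‖βt k‖ ≤ ‖β k‖ + δ := by
        have h1 := norm_sub_norm_le (βt k) (β k)
        rw [norm_sub_rev] at h1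
        have h2 := h k
        linarith
      exact le_trans this (hρk k)
    calc ‖vand L βt ℓ k - vand L β ℓ k‖
        ≤ L * ρ ^ (L - 1) * ‖βt k - β k‖ :=
          pow_sub_pow_norm_le hbt hb hρ1 (le_of_lt ℓ.isLt)
      _ ≤ L * ρ ^ (L - 1) * δ := by
          apply mul_le_mul_of_nonneg_left _ (by positivity)
          rw [norm_sub_rev]; exact h k
  calc ∑ k, ‖vand L βt ℓ k - vand L β ℓ k‖
      ≤ ∑ _k : Fin K, L * ρ ^ (L - 1) * δ := Finset.sum_le_sum fun k _ => key k
    _ = K * (L * ρ ^ (L - 1) * δ) := by rw [Finset.sum_const, Finset.card_fin]; ring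
    _ ≤ Real.sqrt 2 * K * L * ρ ^ (L - 1) * δ := by
        have h2 : (1:ℝ) ≤ Real.sqrt 2 := by
          rw [show (1:ℝ) = Real.sqrt 1 by simp]
          exact Real.sqrt_le_sqrt (by norm_num)
        nlinarith [pow_nonneg hρ0 (L-1), Nat.cast_nonneg (α := ℝ) K,
          Nat.cast_nonneg (α := ℝ) L,
          mul_nonneg (mul_nonneg (Nat.cast_nonneg (α := ℝ) K) (Nat.cast_nonneg (α := ℝ) L)) (mul_nonneg (pow_nonneg hρ0 (L-1)) hδ)]
end

section
/- Let λ_j, λ_k ∈ ℂ with λ_k real and positive, let β = λ_j·conj(λ_k), and let β̃ ∈ ℂ with |β̃ − β| ≤ δ where δ < |λ_j|·|λ_k|. Then the phase of the estimate λ̃_j := (β̃/|β̃|)·|λ̃_j| satisfies |arg(λ̃_j) − arg(λ_j) mod 2π| ≤ 2δ/(|λ_k|·|λ_j|), where the difference mod 2π is taken in [−π, π). -/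
open Real Complex

/-- Key geometric fact: `|Im z| ≤ ‖z‖ * ‖z - 1‖` for any complex `z`. -/
lemma abs_im_le_norm_mul_norm_sub_one (z : ℂ) : |z.im| ≤ ‖z‖ * ‖z - 1‖ := by
  have h1 : ‖z‖ ^ 2 = z.re ^ 2 + z.im ^ 2 := by
    rw [Complex.sq_norm, Complex.normSq_apply]; ring
  have h2 : ‖z - 1‖ ^ 2 = (z.re - 1) ^ 2 + z.im ^ 2 := by
    rw [Complex.sq_norm, Complex.normSq_apply]
    simp [Complex.sub_re, Complex.sub_im]; ring
  have h0 : (0:ℝ) ≤ ‖z‖ * ‖z - 1‖ := by positivity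
  nlinarith [sq_nonneg (z.re ^ 2 + z.im ^ 2 - z.re), abs_nonneg z.im, _root_.sq_abs z.im,
    norm_nonneg z, norm_nonneg (z - 1)]

/-- If `‖z - 1‖ ≤ ε < 1`, then `|arg z| ≤ 2ε`. -/
lemma abs_arg_le_of_norm_sub_one_le {z : ℂ} {ε : ℝ} (h : ‖z - 1‖ ≤ ε) (hε : ε < 1) :
    |Complex.arg z| ≤ 2 * ε := by
  have hre : 0 < z.re := by
    have h1 : |(z - 1).re| ≤ ‖z - 1‖ := Complex.abs_re_le_norm _
    have h2 : (z - 1).re = z.re - 1 := by simp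
    rw [h2] at h1
    have := abs_le.1 h1
    linarith
  have hz0 : z ≠ 0 := fun h0 => by simp [h0] at hre
  have hznorm : 0 < ‖z‖ := norm_pos_iff.2 hz0
  have harg : |Complex.arg z| < π / 2 :=
    Complex.abs_arg_lt_pi_div_two_iff.2 (Or.inl hre)
  have hsin : |Real.sin (Complex.arg z)| = Real.sin |Complex.arg z| := by
    rcases le_or_gt 0 (Complex.arg z) with h1 | h1
    · rw [_root_.abs_of_nonneg h1, _root_.abs_of_nonneg]
      exact Real.sin_nonneg_of_nonneg_of_le_pi h1 (by linarith [Real.pi_pos, le_abs_self z.arg, abs_lt.1 harg|>.2])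
    · rw [abs_of_neg h1, Real.sin_neg, abs_of_neg]
      exact Real.sin_neg_of_neg_of_neg_pi_lt h1 (by linarith [Real.pi_pos, abs_lt.1 harg|>.1])
  have hsinval : |Real.sin (Complex.arg z)| = |z.im| / ‖z‖ := by
    rw [Complex.sin_arg, abs_div, abs_of_pos (show (0:ℝ) < ‖z‖ from hznorm)]
  have hsinle : Real.sin |Complex.arg z| ≤ ε := by
    rw [← hsin, hsinval, div_le_iff₀ hznorm]
    calc |z.im| ≤ ‖z‖ * ‖z - 1‖ := abs_im_le_norm_mul_norm_sub_one z
      _ ≤ ε * ‖z‖ := by rw [mul_comm]; exact mul_le_mul_of_nonneg_right h (le_of_lt hznorm)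
  have hlb : 2 / π * |Complex.arg z| ≤ Real.sin |Complex.arg z| :=
    Real.mul_le_sin (abs_nonneg _) (le_of_lt harg)
  have hπ : (0:ℝ) < π := Real.pi_pos
  have hπ4 : π ≤ 4 := by linarith [Real.pi_le_four]
  have : |Complex.arg z| / 2 ≤ 2 / π * |Complex.arg z| := by
    rw [div_le_iff₀ (by norm_num : (0:ℝ) < 2)]
    have h4 : 2 / π ≥ 1 / 2 := by
      rw [ge_iff_le, div_le_div_iff₀ (by norm_num) hπ]; linarith
    nlinarith [abs_nonneg (Complex.arg z)]
  linarith

/-- Sensitivity of the phase estimate: let `λ_j ∈ ℂ \ {0}`, `λ_k > 0` real, so that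
`β = λ_j·conj(λ_k) = λ_j·λ_k` carries the phase of `λ_j`.  If `β̃` satisfies
`|β̃ − β| ≤ δ < |λ_j|·|λ_k|`, then the phase of the estimate differs from
`arg(λ_j)` (modulo `2π`, represented by `arg(β̃/β)`) by at most `2δ/(|λ_k|·|λ_j|)`. -/
theorem phase_estimate_error (lamj : ℂ) (hj : lamj ≠ 0) (lamk : ℝ) (hk : 0 < lamk)
    (βt : ℂ) (δ : ℝ) (h : ‖βt - lamj * (lamk : ℂ)‖ ≤ δ) (hδ : δ < ‖lamj‖ * lamk) :
    |Complex.arg (βt / (lamj * (lamk : ℂ)))| ≤ 2 * δ / (lamk * ‖lamj‖) := by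
  have hβ : (lamj * (lamk : ℂ)) ≠ 0 := by
    apply mul_ne_zero hj
    exact_mod_cast hk.ne'
  have hβnorm : ‖lamj * (lamk : ℂ)‖ = ‖lamj‖ * lamk := by
    rw [norm_mul, Complex.norm_real, Real.norm_of_nonneg hk.le]
  have hβpos : 0 < ‖lamj * (lamk : ℂ)‖ := norm_pos_iff.2 hβ
  have key : ‖βt / (lamj * (lamk : ℂ)) - 1‖ ≤ δ / (‖lamj‖ * lamk) := by
    rw [← hβnorm]
    have : βt / (lamj * (lamk : ℂ)) - 1 = (βt - lamj * (lamk : ℂ)) / (lamj * (lamk : ℂ)) := by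
      rw [sub_div, div_self hβ]
    rw [this, norm_div]
    gcongr
  have hε : δ / (‖lamj‖ * lamk) < 1 := by
    rw [div_lt_one (hβnorm ▸ hβpos)]
    exact hδ
  have := abs_arg_le_of_norm_sub_one_le key hε
  calc |Complex.arg (βt / (lamj * (lamk : ℂ)))| ≤ 2 * (δ / (‖lamj‖ * lamk)) := this
    _ = 2 * δ / (lamk * ‖lamj‖) := by rw [mul_comm lamk]; ring
end

section
/- Let h_ℓ = ∑_{k=0}^{K-1} η_k β_k^ℓ with nonzero coefficients η_k and pairwise distinct nonzero bases β_k, and let H = (h_{ℓ+k})_{ℓ=0..L−K−1,k=0..K} for L ≥ 2K. For γ ∈ ℂ^{K+1}, the vector γ lies in ker(H) if and only if the polynomial P(z) = ∑_{k=0}^K γ_k z^k vanishes at every base β_0,…,β_{K−1}. In particular, ker(H) is one-dimensional, spanned by the coefficient vector of the Prony polynomial ∏_{k=0}^{K-1}(z − β_k). -/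
open Finset Matrix Polynomial

/-- Kernel of the Prony–Hankel matrix: for samples `h_ℓ = ∑_k η_k β_k^ℓ` of an
exponential sum with nonzero coefficients and pairwise distinct nonzero bases, a
vector `γ` lies in the kernel of the Hankel matrix `H = (h_{ℓ+k})` iff the
polynomial `P(z) = ∑_k γ_k z^k` vanishes at every base; in particular the kernel
is the line spanned by the coefficient vector of the Prony polynomial
`∏_k (z − β_k)`. -/
theorem prony_hankel_kernel {K L : ℕ} (hK : 1 ≤ K) (hL : 2 * K ≤ L)
    (β η : Fin K → ℂ) (hβ0 : ∀ k, β k ≠ 0) (hβ : Function.Injective β)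
    (hη : ∀ k, η k ≠ 0)
    (h : ℕ → ℂ) (hdef : ∀ ℓ : ℕ, h ℓ = ∑ k, η k * β k ^ ℓ)
    (H : Matrix (Fin (L - K)) (Fin (K + 1)) ℂ)
    (hH : ∀ (ℓ : Fin (L - K)) (k : Fin (K + 1)), H ℓ k = h (ℓ.1 + k.1)) :
    (∀ γ : Fin (K + 1) → ℂ,
        H.mulVec γ = 0 ↔ ∀ j : Fin K, ∑ k, γ k * β j ^ (k : ℕ) = 0) ∧
      {γ : Fin (K + 1) → ℂ | H.mulVec γ = 0} =
        Set.range (fun t : ℂ =>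
          t • (fun k : Fin (K + 1) => (∏ j, (X - C (β j))).coeff (k : ℕ) : Fin (K + 1) → ℂ)) := by
  have hKL : K ≤ L - K := by omega
  -- key formula for mulVec
  have key : ∀ (γ : Fin (K + 1) → ℂ) (ℓ : Fin (L - K)),
      H.mulVec γ ℓ = ∑ j, (η j * ∑ k, γ k * β j ^ (k : ℕ)) * β j ^ (ℓ : ℕ) := by
    intro γ ℓ
    simp only [Matrix.mulVec, dotProduct, hH, hdef, Finset.sum_mul]
    rw [Finset.sum_comm]
    refine Finset.sum_congr rfl fun j _ => ?_
    rw [Finset.mul_sum, Finset.sum_mul]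
    refine Finset.sum_congr rfl fun k _ => ?_
    rw [pow_add]; ring
  have part1 : ∀ γ : Fin (K + 1) → ℂ,
      H.mulVec γ = 0 ↔ ∀ j : Fin K, ∑ k, γ k * β j ^ (k : ℕ) = 0 := by
    intro γ
    constructor
    · intro h0 j
      have hz : (fun j => η j * ∑ k, γ k * β j ^ (k : ℕ)) = 0 := by
        apply eq_zero_of_forall_pow_sum_mul_pow_eq_zero hβ
        intro i
        have := congrFun h0 (Fin.castLE hKL i)
        rw [key] at this
        simpa using this
      have := congrFun hz j
      simp only [Pi.zero_apply] at this
      exact (mul_eq_zero.mp this).resolve_left (hη j)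
    · intro hv
      funext ℓ
      rw [key]
      simp [hv]
  refine ⟨part1, ?_⟩
  set p : ℂ[X] := ∏ j, (X - C (β j)) with hp
  have hmonic : p.Monic := monic_prod_of_monic _ _ fun j _ => monic_X_sub_C _
  have hdeg : p.natDegree = K := by
    rw [hp, natDegree_prod _ _ fun j _ => X_sub_C_ne_zero _]
    simp
  have hpe : ∀ j, p.eval (β j) = 0 := by
    intro j
    rw [hp, eval_prod]
    exact Finset.prod_eq_zero (Finset.mem_univ j) (by simp)
  ext γ
  simp only [Set.mem_setOf_eq, Set.mem_range]
  rw [part1]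
  constructor
  · intro hS
    set Q : ℂ[X] := ∑ k : Fin (K + 1), C (γ k) * X ^ (k : ℕ) with hQ
    have hQc : ∀ m : Fin (K + 1), Q.coeff (m : ℕ) = γ m := by
      intro m
      simp only [hQ, finset_sum_coeff, coeff_C_mul, coeff_X_pow, mul_ite, mul_one, mul_zero]
      rw [Finset.sum_eq_single m (fun b _ hb => by
        simp only [ite_eq_right_iff]
        exact fun hmb => absurd (Fin.val_injective hmb).symm hb) (by simp)]
      simp
    have hQeval : ∀ j, Q.eval (β j) = 0 := by
      intro j
      rw [hQ]
      simp only [eval_finset_sum, eval_mul, eval_C, eval_pow, eval_X]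
      exact hS j
    have hQdeg : Q.natDegree ≤ K := by
      rw [natDegree_le_iff_coeff_eq_zero]
      intro N hN
      simp only [hQ, finset_sum_coeff, coeff_C_mul, coeff_X_pow, mul_ite, mul_one, mul_zero]
      refine Finset.sum_eq_zero fun k _ => ?_
      have hk : ¬ (N = (k : ℕ)) := by omega
      simp [hk]
    refine ⟨γ (Fin.last K), ?_⟩
    set t := γ (Fin.last K) with ht
    set R : ℂ[X] := Q - C t * p with hR
    have hRdeg : R.natDegree ≤ K :=
      le_trans (natDegree_sub_le _ _)
        (max_le hQdeg (le_trans (natDegree_C_mul_le _ _) hdeg.le))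
    have hRK : R.coeff K = 0 := by
      have h1 : Q.coeff K = t := by simpa using hQc (Fin.last K)
      have h2 : p.coeff K = 1 := by
        have := hmonic.leadingCoeff
        rwa [leadingCoeff, hdeg] at this
      simp [hR, h1, h2]
    have hR0 : R = 0 := by
      by_contra h0
      have hlt : R.natDegree < K := by
        rcases lt_or_eq_of_le hRdeg with h' | h'
        · exact h'
        · exfalso
          apply h0
          rw [← leadingCoeff_eq_zero, leadingCoeff, h']
          exact hRK
      exact h0 (eq_zero_of_natDegree_lt_card_of_eval_eq_zero R hβ
        (fun j => by simp [hR, hQeval j, hpe j]) (by simpa using hlt))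
    have hQp : Q = C t * p := by rwa [sub_eq_zero] at hR0
    funext k
    have := hQc k
    rw [hQp] at this
    simp only [coeff_C_mul] at this
    simp [← this, mul_comm]
  · rintro ⟨t, rfl⟩
    intro j
    simp only [Pi.smul_apply, smul_eq_mul]
    have : ∑ k : Fin (K + 1), p.coeff (k : ℕ) * β j ^ (k : ℕ) = p.eval (β j) := by
      rw [eval_eq_sum_range, hdeg, ← Fin.sum_univ_eq_sum_range]
    calc ∑ k : Fin (K + 1), t * p.coeff (k : ℕ) * β j ^ (k : ℕ)
        = t * ∑ k : Fin (K + 1), p.coeff (k : ℕ) * β j ^ (k : ℕ) := by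
          rw [Finset.mul_sum]; exact Finset.sum_congr rfl fun k _ => by ring
      _ = 0 := by rw [this, hpe j, mul_zero]
end

section
/- For β ∈ ℂ^K with pairwise distinct entries, the inverse of the square Vandermonde matrix V(β) = (β_k^ℓ)_{ℓ,k=0}^{K−1} satisfies ‖V(β)^{−1}‖_∞ ≤ π_β / σ_β^{K−1}, where ‖·‖_∞ is the maximum-row-sum norm, π_β = ∏_{k=0}^{K-1}(1+|β_k|), and σ_β = min_{ℓ<k}|β_ℓ − β_k|. -/
open Finset Matrix

/-- The square Vandermonde matrix `V(β) = (β_k^ℓ)_{ℓ,k=0}^{K−1}`. -/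
noncomputable def vandSq {K : ℕ} (β : Fin K → ℂ) : Matrix (Fin K) (Fin K) ℂ :=
  fun ℓ k => β k ^ (ℓ : ℕ)

/-- The minimal separation `σ_β = min_{ℓ<k} |β_ℓ − β_k|`. -/
noncomputable def minSep {K : ℕ} (β : Fin K → ℂ) : ℝ :=
  sInf {d : ℝ | ∃ l k : Fin K, l < k ∧ d = ‖β l - β k‖}

open Polynomial in

lemma l1_step (a : ℂ) (P : Polynomial ℂ) (n : ℕ) :
    ∑ k ∈ Finset.range (n + 1), ‖((X - C a) * P).coeff k‖
      ≤ (1 + ‖a‖) * ∑ k ∈ Finset.range (n + 1), ‖P.coeff k‖ := by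
  have key : ∀ k : ℕ, ‖((X - C a) * P).coeff k‖
      ≤ ‖(X * P).coeff k‖ + ‖a‖ * ‖P.coeff k‖ := by
    intro k
    have hexp : (X - C a) * P = X * P - C a * P := by ring
    rw [hexp, Polynomial.coeff_sub, Polynomial.coeff_C_mul]
    have h := norm_sub_le ((X * P).coeff k) (a * P.coeff k)
    rw [norm_mul] at h
    exact h
  have hXP : ∑ k ∈ Finset.range (n + 1), ‖(X * P).coeff k‖
      ≤ ∑ k ∈ Finset.range (n + 1), ‖P.coeff k‖ := by
    rw [Finset.sum_range_succ']
    simp only [Polynomial.coeff_X_mul]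
    have h0 : ‖(X * P).coeff 0‖ = 0 := by simp [Polynomial.coeff_X_mul_zero]
    rw [h0, add_zero]
    exact Finset.sum_le_sum_of_subset_of_nonneg
      (Finset.range_subset_range.mpr (Nat.le_succ n)) (fun _ _ _ => norm_nonneg _)
  calc ∑ k ∈ Finset.range (n + 1), ‖((X - C a) * P).coeff k‖
      ≤ ∑ k ∈ Finset.range (n + 1), (‖(X * P).coeff k‖ + ‖a‖ * ‖P.coeff k‖) :=
        Finset.sum_le_sum fun k _ => key k
    _ = (∑ k ∈ Finset.range (n + 1), ‖(X * P).coeff k‖)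
          + ‖a‖ * ∑ k ∈ Finset.range (n + 1), ‖P.coeff k‖ := by
        rw [Finset.sum_add_distrib, Finset.mul_sum]
    _ ≤ (∑ k ∈ Finset.range (n + 1), ‖P.coeff k‖)
          + ‖a‖ * ∑ k ∈ Finset.range (n + 1), ‖P.coeff k‖ := by gcongr
    _ = (1 + ‖a‖) * ∑ k ∈ Finset.range (n + 1), ‖P.coeff k‖ := by ring

open Polynomial in
lemma l1_coeff_prod_bound {ι : Type*} [DecidableEq ι] (t : Finset ι) (a : ι → ℂ) (n : ℕ) :
    ∑ k ∈ Finset.range (n + 1), ‖(∏ j ∈ t, (X - C (a j))).coeff k‖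
      ≤ ∏ j ∈ t, (1 + ‖a j‖) := by
  induction t using Finset.induction with
  | empty =>
    simp only [Finset.prod_empty]
    rw [Finset.sum_eq_single 0]
    · simp
    · intro b _ hb; simp [Polynomial.coeff_one, hb]
    · intro h; exact absurd (Finset.mem_range.mpr (Nat.succ_pos n)) h
  | insert i t' hi ih =>
    rw [Finset.prod_insert hi, Finset.prod_insert hi]
    calc ∑ k ∈ Finset.range (n + 1), ‖((X - C (a i)) * ∏ j ∈ t', (X - C (a j))).coeff k‖
        ≤ (1 + ‖a i‖) * ∑ k ∈ Finset.range (n + 1), ‖(∏ j ∈ t', (X - C (a j))).coeff k‖ :=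
          l1_step _ _ _
      _ ≤ (1 + ‖a i‖) * ∏ j ∈ t', (1 + ‖a j‖) :=
          mul_le_mul_of_nonneg_left ih (by positivity)

/-- Bound on the inverse Vandermonde matrix: for pairwise distinct entries, every
absolute row sum of `V(β)⁻¹` (hence the maximum-row-sum operator norm) is bounded
by `π_β / σ_β^{K−1}` with `π_β = ∏ (1+|β_k|)`. -/
theorem inverse_vandermonde_bound {K : ℕ} (hK : 1 ≤ K) (β : Fin K → ℂ)
    (hβ : Function.Injective β) :
    ∀ ℓ : Fin K, ∑ k, ‖(vandSq β)⁻¹ ℓ k‖ ≤ (∏ k, (1 + ‖β k‖)) / minSep β ^ (K - 1) := by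
  intro ℓ
  classical
  have hinj : Set.InjOn β (Finset.univ : Finset (Fin K)) := hβ.injOn
  -- the candidate inverse: coefficients of Lagrange basis polynomials
  set M : Matrix (Fin K) (Fin K) ℂ :=
    fun i k => (Lagrange.basis Finset.univ β i).coeff (k : ℕ) with hM
  have hdeg : ∀ i : Fin K, (Lagrange.basis Finset.univ β i).natDegree < K := by
    intro i
    rw [Lagrange.natDegree_basis hinj (Finset.mem_univ i), Finset.card_univ,
      Fintype.card_fin]
    omega
  have hMV : M * vandSq β = 1 := by
    ext i k
    rw [Matrix.mul_apply]
    have : ∑ m : Fin K, M i m * vandSq β m k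
        = ∑ m ∈ Finset.range K, (Lagrange.basis Finset.univ β i).coeff m * (β k) ^ m := by
      rw [← Fin.sum_univ_eq_sum_range
        (fun m => (Lagrange.basis Finset.univ β i).coeff m * (β k) ^ m)]
      rfl
    rw [this, ← Polynomial.eval_eq_sum_range' (hdeg i)]
    by_cases hik : i = k
    · subst hik
      rw [Lagrange.eval_basis_self hinj (Finset.mem_univ i), Matrix.one_apply_eq]
    · rw [Lagrange.eval_basis_of_ne hik (Finset.mem_univ k), Matrix.one_apply_ne hik]
  have hinv : (vandSq β)⁻¹ = M := Matrix.inv_eq_left_inv hMV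
  rw [hinv]
  -- split the Lagrange basis polynomial into constant and monic parts
  set c : ℂ := ∏ j ∈ Finset.univ.erase ℓ, (β ℓ - β j)⁻¹ with hc
  set Q : Polynomial ℂ := ∏ j ∈ Finset.univ.erase ℓ, (Polynomial.X - Polynomial.C (β j))
    with hQ
  have hbasis : Lagrange.basis Finset.univ β ℓ = Polynomial.C c * Q := by
    rw [Lagrange.basis, hc, hQ, map_prod, ← Finset.prod_mul_distrib]
    exact Finset.prod_congr rfl fun j _ => by rw [Lagrange.basisDivisor]
  have hcard : (Finset.univ.erase ℓ).card = K - 1 := by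
    rw [Finset.card_erase_of_mem (Finset.mem_univ ℓ), Finset.card_univ, Fintype.card_fin]
  -- the row sum
  have hrow : ∑ k, ‖M ℓ k‖
      = ‖c‖ * ∑ k ∈ Finset.range K, ‖Q.coeff k‖ := by
    rw [← Fin.sum_univ_eq_sum_range (fun k => ‖Q.coeff k‖), Finset.mul_sum]
    refine Finset.sum_congr rfl fun k _ => ?_
    rw [hM]
    simp only [hbasis, Polynomial.coeff_C_mul, norm_mul]
  rw [hrow]
  -- bound on the coefficient sum
  have hKsucc : K = (K - 1) + 1 := by omega
  have hQbound : ∑ k ∈ Finset.range K, ‖Q.coeff k‖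
      ≤ ∏ j ∈ Finset.univ.erase ℓ, (1 + ‖β j‖) := by
    have h := l1_coeff_prod_bound (Finset.univ.erase ℓ) β (K - 1)
    rwa [show K - 1 + 1 = K from by omega] at h
  have hprod_le : ∏ j ∈ Finset.univ.erase ℓ, (1 + ‖β j‖) ≤ ∏ k, (1 + ‖β k‖) := by
    rw [← Finset.mul_prod_erase _ _ (Finset.mem_univ ℓ)]
    refine le_mul_of_one_le_left (Finset.prod_nonneg fun j _ => by positivity) ?_
    have := norm_nonneg (β ℓ); linarith
  -- bound on ‖c‖
  have hcnorm : ‖c‖ = ∏ j ∈ Finset.univ.erase ℓ, ‖β ℓ - β j‖⁻¹ := by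
    rw [hc, norm_prod]
    exact Finset.prod_congr rfl fun j _ => norm_inv _
  have hcbound : ‖c‖ ≤ (minSep β ^ (K - 1))⁻¹ := by
    rcases Nat.lt_or_ge K 2 with hK1 | hK2
    · -- K = 1
      have : K = 1 := by omega
      subst this
      have he : (Finset.univ.erase ℓ) = (∅ : Finset (Fin 1)) := by
        apply Finset.eq_empty_of_forall_notMem
        intro x hx
        exact (Finset.mem_erase.mp hx).1 (Subsingleton.elim x ℓ)
      rw [hcnorm, he]
      simp
    · -- K ≥ 2 : minSep is positive and below every gap
      set S : Set ℝ := {d : ℝ | ∃ l k : Fin K, l < k ∧ d = ‖β l - β k‖} with hS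
      have hbdd : BddBelow S := by
        refine ⟨0, fun d hd => ?_⟩
        obtain ⟨l, k, _, rfl⟩ := hd
        exact norm_nonneg _
      have hfin : S.Finite := by
        have : S ⊆ Set.range (fun p : Fin K × Fin K => ‖β p.1 - β p.2‖) := by
          rintro d ⟨l, k, _, rfl⟩
          exact ⟨(l, k), rfl⟩
        exact (Set.finite_range _).subset this
      have hne : S.Nonempty := by
        refine ⟨‖β ⟨0, by omega⟩ - β ⟨1, by omega⟩‖, ⟨0, by omega⟩, ⟨1, by omega⟩, ?_, rfl⟩
        exact Fin.mk_lt_mk.mpr (by omega)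
      have hmem : sInf S ∈ S := hne.csInf_mem hfin
      have hσpos : 0 < minSep β := by
        obtain ⟨l, k, hlk, hd⟩ := hmem
        have hne' : β l ≠ β k := fun h => (ne_of_lt hlk) (hβ h)
        have : (0:ℝ) < ‖β l - β k‖ := by
          rw [norm_pos_iff]; exact sub_ne_zero_of_ne hne'
        rw [minSep, ← hS]; rw [← hd] at this; exact this
      have hσle : ∀ j ∈ Finset.univ.erase ℓ, minSep β ≤ ‖β ℓ - β j‖ := by
        intro j hj
        have hjℓ : j ≠ ℓ := (Finset.mem_erase.mp hj).1
        rcases lt_or_gt_of_ne hjℓ with h | h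
        · rw [norm_sub_rev]
          exact csInf_le hbdd ⟨j, ℓ, h, rfl⟩
        · exact csInf_le hbdd ⟨ℓ, j, h, rfl⟩
      rw [hcnorm, ← hcard, ← Finset.prod_const, ← Finset.prod_inv_distrib]
      refine Finset.prod_le_prod (fun j _ => by positivity) fun j hj => ?_
      exact inv_anti₀ hσpos (hσle j hj)
  -- combine
  have hσpow : (0:ℝ) ≤ (minSep β ^ (K - 1))⁻¹ := by
    rcases le_or_gt 0 (minSep β ^ (K - 1))⁻¹ with h | h
    · exact h
    · exact absurd (le_trans (norm_nonneg c) hcbound) (not_le.mpr h)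
  have hsum_nonneg : (0:ℝ) ≤ ∑ k ∈ Finset.range K, ‖Q.coeff k‖ :=
    Finset.sum_nonneg fun _ _ => norm_nonneg _
  calc ‖c‖ * ∑ k ∈ Finset.range K, ‖Q.coeff k‖
      ≤ (minSep β ^ (K - 1))⁻¹ * ∏ k, (1 + ‖β k‖) := by
        exact mul_le_mul hcbound (le_trans hQbound hprod_le) hsum_nonneg hσpow
    _ = (∏ k, (1 + ‖β k‖)) / minSep β ^ (K - 1) := by
        rw [div_eq_mul_inv, mul_comm]
end

section
/- Let A = S Λ S^{−1} ∈ ℂ^{d×d} be diagonalizable with collision-free eigenvalues (all products λ_j·conj(λ_k), j,k ∈ {0,…,d−1}, pairwise distinct), and let φ ∈ ℂ^d be such that ψ = S^{−1}φ has no zero component. If x, x' ∈ ℂ^d satisfy |⟨x, A^ℓ φ⟩| = |⟨x', A^ℓ φ⟩| for all ℓ = 0,…,d²−1, then x' = e^{iθ}·x for some θ ∈ ℝ. -/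
open Finset Matrix

/-- The inner product `⟨u, v⟩ = ∑ u_k conj(v_k)` on `ℂ^d`. -/
noncomputable def ip {d : ℕ} (u v : Fin d → ℂ) : ℂ :=
  ∑ k, u k * star (v k)

lemma mul_star_self_eq_normSq (z : ℂ) : z * star z = ((‖z‖ : ℝ) : ℂ)^2 := by
  rw [Complex.star_def, Complex.mul_conj]
  norm_cast
  simp [Complex.normSq_eq_norm_sq]

lemma vandermonde_isUnit {n : ℕ} (v : Fin n → ℂ) (hv : Function.Injective v) :
    IsUnit (Matrix.vandermonde v).det := by
  rw [Matrix.det_vandermonde, isUnit_iff_ne_zero]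
  exact Finset.prod_ne_zero_iff.2 fun i _ => Finset.prod_ne_zero_iff.2
    fun j hj => sub_ne_zero.2 fun h => absurd (hv h) (Finset.mem_Ioi.1 hj).ne'

lemma eq_zero_of_mulVec_eq_zero {n : ℕ} (M : Matrix (Fin n) (Fin n) ℂ)
    (h : IsUnit M.det) (b : Fin n → ℂ) (hb : M.mulVec b = 0) : b = 0 :=
  Matrix.mulVec_injective_iff_isUnit.2 ((Matrix.isUnit_iff_isUnit_det M).2 h)
    (by rw [hb, Matrix.mulVec_zero])


/-- Uniqueness of phase retrieval in dynamical sampling: let `A = SΛS⁻¹` have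
collision-free eigenvalues (the `d²` products `λ_j conj(λ_k)` are pairwise
distinct) and let `ψ = S⁻¹φ` have no zero component.  If two signals `x, x'`
produce the same phaseless samples `|⟨·, A^ℓ φ⟩|` for `ℓ = 0, …, d²−1`, then
`x' = e^{iθ} x` for some `θ ∈ ℝ`. -/
theorem phase_retrieval_uniqueness {d : ℕ}
    (A S : Matrix (Fin d) (Fin d) ℂ) (lam : Fin d → ℂ) (hS : IsUnit S.det)
    (hA : A = S * Matrix.diagonal lam * S⁻¹)
    (hcf : Function.Injective (fun p : Fin d × Fin d => lam p.1 * star (lam p.2)))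
    (φ : Fin d → ℂ) (hφ : ∀ k, S⁻¹.mulVec φ k ≠ 0)
    (x x' : Fin d → ℂ)
    (hsamp : ∀ ℓ : ℕ, ℓ < d ^ 2 →
      ‖ip x ((A ^ ℓ).mulVec φ)‖ = ‖ip x' ((A ^ ℓ).mulVec φ)‖) :
    ∃ θ : ℝ, x' = Complex.exp (θ * Complex.I) • x := by
  classical
  set ψ : Fin d → ℂ := S⁻¹.mulVec φ with hψdef
  have hSH : IsUnit (Sᴴ).det := by
    rw [Matrix.det_conjTranspose]; exact hS.star
  have hSHinj : Function.Injective (Sᴴ).mulVec :=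
    Matrix.mulVec_injective_iff_isUnit.2 ((Matrix.isUnit_iff_isUnit_det _).2 hSH)
  have hψne : ∀ k, star (ψ k) ≠ 0 := fun k => star_ne_zero.2 (hφ k)
  -- coefficients
  set c : Fin d → ℂ := fun k => star (ψ k) * (Sᴴ).mulVec x k with hcdef
  set c' : Fin d → ℂ := fun k => star (ψ k) * (Sᴴ).mulVec x' k with hc'def
  -- Step 1: A^ℓ φ = S (Λ^ℓ ψ)
  have hpow : ∀ ℓ : ℕ, (A ^ ℓ).mulVec φ = S.mulVec (fun k => lam k ^ ℓ * ψ k) := by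
    intro ℓ
    induction ℓ with
    | zero =>
      simp only [pow_zero, Matrix.one_mulVec]
      have : S.mulVec (S⁻¹.mulVec φ) = φ := by
        rw [Matrix.mulVec_mulVec, Matrix.mul_nonsing_inv _ hS, Matrix.one_mulVec]
      simpa [hψdef] using this.symm
    | succ n ih =>
      have h1 : (A ^ (n + 1)).mulVec φ = A.mulVec ((A ^ n).mulVec φ) := by
        rw [pow_succ', Matrix.mulVec_mulVec]
      have h2 : S⁻¹.mulVec (S.mulVec fun k => lam k ^ n * ψ k)
          = fun k => lam k ^ n * ψ k := by
        rw [Matrix.mulVec_mulVec, Matrix.nonsing_inv_mul _ hS, Matrix.one_mulVec]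
      have h3 : (S * Matrix.diagonal lam * S⁻¹).mulVec (S.mulVec fun k => lam k ^ n * ψ k)
          = S.mulVec ((Matrix.diagonal lam).mulVec fun k => lam k ^ n * ψ k) := by
        rw [← Matrix.mulVec_mulVec, h2, ← Matrix.mulVec_mulVec]
      have h4 : ((Matrix.diagonal lam).mulVec fun k => lam k ^ n * ψ k)
          = fun k => lam k ^ (n + 1) * ψ k := by
        funext k
        rw [Matrix.mulVec_diagonal]
        ring
      rw [h1, ih, hA, h3, h4]
  -- Step 2: the samples as exponential sums
  have hFgen : ∀ (y : Fin d → ℂ) (ℓ : ℕ),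
      ip y ((A ^ ℓ).mulVec φ)
        = ∑ k, (star (ψ k) * (Sᴴ).mulVec y k) * (star (lam k)) ^ ℓ := by
    intro y ℓ
    rw [hpow ℓ]
    unfold ip
    simp only [Matrix.mulVec, dotProduct, Matrix.conjTranspose_apply, star_sum,
      Finset.mul_sum, Finset.sum_mul]
    rw [Finset.sum_comm]
    refine Finset.sum_congr rfl fun k _ => Finset.sum_congr rfl fun j _ => ?_
    simp only [star_mul', star_pow]
    ring
  -- Step 3: squared samples agree
  have hsq : ∀ ℓ : ℕ, ℓ < d ^ 2 →
      ∑ p : Fin d × Fin d, (c p.1 * star (c p.2)) * ((star (lam p.1)) * lam p.2) ^ ℓ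
        = ∑ p : Fin d × Fin d, (c' p.1 * star (c' p.2)) * ((star (lam p.1)) * lam p.2) ^ ℓ := by
    intro ℓ hℓ
    have key : ∀ y : Fin d → ℂ,
        ip y ((A ^ ℓ).mulVec φ) * star (ip y ((A ^ ℓ).mulVec φ))
          = ∑ p : Fin d × Fin d,
              ((star (ψ p.1) * (Sᴴ).mulVec y p.1) * star (star (ψ p.2) * (Sᴴ).mulVec y p.2))
                * ((star (lam p.1)) * lam p.2) ^ ℓ := by
      intro y
      rw [hFgen y ℓ, star_sum, Finset.sum_mul_sum, Fintype.sum_prod_type]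
      refine Finset.sum_congr rfl fun j _ => Finset.sum_congr rfl fun k _ => ?_
      simp only [star_mul', star_pow, star_star, mul_pow]
      ring
    have hnorm : ip x ((A ^ ℓ).mulVec φ) * star (ip x ((A ^ ℓ).mulVec φ))
        = ip x' ((A ^ ℓ).mulVec φ) * star (ip x' ((A ^ ℓ).mulVec φ)) := by
      rw [mul_star_self_eq_normSq, mul_star_self_eq_normSq, hsamp ℓ hℓ]
    rw [key x, key x'] at hnorm
    simpa [hcdef, hc'def] using hnorm
  -- Step 4: Vandermonde inversion
  have hcc : ∀ p : Fin d × Fin d, c p.1 * star (c p.2) = c' p.1 * star (c' p.2) := by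
    set μ : Fin d × Fin d → ℂ := fun p => star (lam p.1) * lam p.2 with hμdef
    have hμinj : Function.Injective μ := by
      have he : μ = (fun z : ℂ => star z) ∘ (fun p : Fin d × Fin d => lam p.1 * star (lam p.2)) := by
        funext p; simp [hμdef, star_mul', mul_comm]
      rw [he]
      exact star_injective.comp hcf
    set e : Fin d × Fin d ≃ Fin (d * d) := finProdFinEquiv with hedef
    set ν : Fin (d * d) → ℂ := μ ∘ e.symm with hνdef
    have hνinj : Function.Injective ν := hμinj.comp e.symm.injective
    set a : Fin d × Fin d → ℂ :=
      fun p => c p.1 * star (c p.2) - c' p.1 * star (c' p.2) with hadef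
    set b : Fin (d * d) → ℂ := fun i => a (e.symm i) with hbdef
    have hb0 : b = 0 := by
      refine eq_zero_of_mulVec_eq_zero (Matrix.vandermonde ν)ᵀ ?_ b ?_
      · rw [Matrix.det_transpose]; exact vandermonde_isUnit ν hνinj
      · funext ℓ
        have hℓ : (ℓ : ℕ) < d ^ 2 := by rw [pow_two]; exact ℓ.isLt
        rw [Matrix.mulVec, Pi.zero_apply]
        show ∑ i, (Matrix.vandermonde ν)ᵀ ℓ i * b i = 0
        simp only [Matrix.transpose_apply, Matrix.vandermonde_apply]
        calc ∑ i, ν i ^ (ℓ : ℕ) * b i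
            = ∑ p : Fin d × Fin d, μ p ^ (ℓ : ℕ) * a p :=
              Equiv.sum_comp e.symm (fun p => μ p ^ (ℓ : ℕ) * a p)
          _ = 0 := by
              simp only [hadef, mul_sub]
              rw [Finset.sum_sub_distrib, sub_eq_zero]
              have h := hsq (ℓ : ℕ) hℓ
              simp only [hμdef]
              exact (Finset.sum_congr rfl fun p _ => mul_comm _ _).trans
                (h.trans (Finset.sum_congr rfl fun p _ => mul_comm _ _))
    intro p
    have h1 : b (e p) = 0 := by rw [hb0]; rfl
    have h2 : a p = 0 := by simpa [hbdef] using h1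
    exact sub_eq_zero.1 h2
  -- Step 5: recover the global phase
  by_cases hz : ∀ k, c k = 0
  · -- both signals are zero
    have hx0 : x = 0 := by
      refine hSHinj ?_
      rw [Matrix.mulVec_zero]
      funext k
      rcases mul_eq_zero.1 (hz k) with h | h
      · exact absurd h (hψne k)
      · exact h
    have hc'0 : ∀ k, c' k = 0 := by
      intro k
      have h := (hcc (k, k)).symm
      rw [hz k, zero_mul] at h
      rcases mul_eq_zero.1 h with h' | h'
      · exact h'
      · exact star_eq_zero.1 h'
    have hx'0 : x' = 0 := by
      refine hSHinj ?_
      rw [Matrix.mulVec_zero]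
      funext k
      rcases mul_eq_zero.1 (hc'0 k) with h | h
      · exact absurd h (hψne k)
      · exact h
    exact ⟨0, by simp [hx0, hx'0]⟩
  · push_neg at hz
    obtain ⟨j0, hj0⟩ := hz
    have hdiag : ∀ k, c k * star (c k) = c' k * star (c' k) := fun k => hcc (k, k)
    have hnormeq : ‖c j0‖ = ‖c' j0‖ := by
      have h := hdiag j0
      rw [mul_star_self_eq_normSq, mul_star_self_eq_normSq] at h
      have h2 : (‖c j0‖ : ℝ) ^ 2 = (‖c' j0‖ : ℝ) ^ 2 := by exact_mod_cast h
      exact (sq_eq_sq₀ (norm_nonneg _) (norm_nonneg _)).1 h2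
    have hj0' : c' j0 ≠ 0 := by
      intro h
      rw [h, norm_zero] at hnormeq
      exact hj0 (norm_eq_zero.1 hnormeq)
    set u : ℂ := star (c j0) / star (c' j0) with hudef
    have hcu : ∀ k, c' k = u * c k := by
      intro k
      have h := hcc (k, j0)
      have hstar : star (c' j0) ≠ 0 := star_ne_zero.2 hj0'
      have h2 : c' k * star (c' j0) = star (c j0) * c k := by rw [← h]; ring
      rw [hudef, div_mul_eq_mul_div, eq_div_iff hstar]
      linear_combination h2
    have hun : ‖u‖ = 1 := by
      rw [hudef, norm_div, norm_star, norm_star, hnormeq, div_self]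
      exact norm_ne_zero_iff.2 hj0'
    have hu : Complex.exp ((u.arg : ℂ) * Complex.I) = u := by
      have h := Complex.norm_mul_exp_arg_mul_I u
      have habs : ((‖u‖ : ℝ) : ℂ) = 1 := by
        rw [hun]; norm_num
      rwa [habs, one_mul] at h
    have hx : (Sᴴ).mulVec x' = (Sᴴ).mulVec (u • x) := by
      funext k
      have h : star (ψ k) * (Sᴴ).mulVec x' k = star (ψ k) * (u * (Sᴴ).mulVec x k) := by
        have h3 := hcu k
        simp only [hcdef, hc'def] at h3
        rw [h3]; ring
      have h2 := mul_left_cancel₀ (hψne k) h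
      simp [Matrix.mulVec_smul, h2]
    exact ⟨u.arg, by rw [hu]; exact hSHinj hx⟩
end
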